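/- Let n ≥ 3, 1 ≤ l < k ≤ n, α > 0, and let A = diag(a_1,…,a_n) ∈ 𝒜_{k,l} be diagonal with a = (a_1,…,a_n), H = H_k(a), h = h_l(a), ℋ = (k−l)/(2(H−h)), and ω_α(x) := ω_α(½ xᵀA x). (i) If k − l = 1 and H − h < 1/2, then the quantity μ₁(α) := β − s̄ + ∫_{s̄}^∞ (v_α(t) − 1) dt is finite and ω_α(x) = ½ xᵀA x + μ₁(α) + O(|x|^{2−2ℋ}) as |x| → ∞. (ii) If k − l ≥ 2, then μ₁(α) is finite and there exists θ ∈ ((k−l−2)/(n−2), 1] (depending only on n, k, l, A) such that ω_α(x) = ½ xᵀA x + μ₁(α) + O(|x|^{θ(2−n)}) as |x| → ∞. -/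

import Mathlib

open scoped BigOperators
open Filter MeasureTheory Set

noncomputable section

/-- Euclidean `n`-space `ℝⁿ`. -/
abbrev En (n : ℕ) : Type := EuclideanSpace ℝ (Fin n)

/-- `σ_k(a)`: the `k`-th elementary symmetric polynomial of `a : Fin n → ℝ`. -/
def esym (n k : ℕ) (a : Fin n → ℝ) : ℝ :=
  ∑ t ∈ Finset.powersetCard k (Finset.univ : Finset (Fin n)), ∏ i ∈ t, a i

/-- `σ_{k;i}(a) := σ_k(a)|_{a_i = 0}`. -/
def esymDel (n k : ℕ) (a : Fin n → ℝ) (i : Fin n) : ℝ :=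
  esym n k (Function.update a i 0)

/-- `H_k(a) = max_{1 ≤ i ≤ n} σ_{k-1;i}(a) a_i / σ_k(a)`. -/
def Hfun (n k : ℕ) (a : Fin n → ℝ) : ℝ :=
  ⨆ i : Fin n, esymDel n (k - 1) a i * a i / esym n k a

/-- `h_l(a) = min_{1 ≤ i ≤ n} σ_{l-1;i}(a) a_i / σ_l(a)`, with `h_0 = 0`. -/
def hfun (n l : ℕ) (a : Fin n → ℝ) : ℝ :=
  if l = 0 then 0 else ⨅ i : Fin n, esymDel n (l - 1) a i * a i / esym n l a

/-- The Hessian matrix `D²u(x)` of a function `u : ℝⁿ → ℝ`. -/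
def hess {n : ℕ} (u : En n → ℝ) (x : En n) : Matrix (Fin n) (Fin n) ℝ :=
  Matrix.of fun i j =>
    fderiv ℝ (fun y => fderiv ℝ u y (EuclideanSpace.single j 1)) x (EuclideanSpace.single i 1)

/-- `σ_k(λ(M))`: the `k`-th elementary symmetric function of the eigenvalues of `M`,
expressed via the coefficients of the characteristic polynomial. -/
def sigmaEig {n : ℕ} (k : ℕ) (M : Matrix (Fin n) (Fin n) ℝ) : ℝ :=
  (-1 : ℝ) ^ k * M.charpoly.coeff (n - k)

/-- The Hessian quotient operator `S_{k,l}(M) = σ_k(λ(M))/σ_l(λ(M))`. -/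
def Skl {n : ℕ} (k l : ℕ) (M : Matrix (Fin n) (Fin n) ℝ) : ℝ :=
  sigmaEig k M / sigmaEig l M

/-- The Garding cone `Γ_k = {λ : σ_j(λ) > 0, 1 ≤ j ≤ k}`. -/
def GammaCone (n k : ℕ) : Set (Fin n → ℝ) :=
  {lam | ∀ j : ℕ, 1 ≤ j → j ≤ k → 0 < esym n j lam}

/-- `ψ` is `k`-convex at `x`: the (symmetric) Hessian has eigenvalue vector in `closure Γ_k`. -/
def KConvexAt (n k : ℕ) (ψ : En n → ℝ) (x : En n) : Prop :=
  ∃ hsym : (hess ψ x).IsHermitian, hsym.eigenvalues ∈ closure (GammaCone n k)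

/-- Viscosity subsolution of `S_{k,l}(D²u) = 1` on `Ω`. -/
def ViscSubOn (n k l : ℕ) (Ω : Set (En n)) (u : En n → ℝ) : Prop :=
  UpperSemicontinuousOn u Ω ∧
  ∀ ψ : En n → ℝ, ContDiffOn ℝ 2 ψ Ω → (∀ x ∈ Ω, KConvexAt n k ψ x) →
    ∀ x₀ ∈ Ω, ψ x₀ = u x₀ → (∀ x ∈ Ω, u x ≤ ψ x) → 1 ≤ Skl k l (hess ψ x₀)

/-- Viscosity supersolution of `S_{k,l}(D²u) = 1` on `Ω`. -/
def ViscSupOn (n k l : ℕ) (Ω : Set (En n)) (u : En n → ℝ) : Prop :=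
  LowerSemicontinuousOn u Ω ∧
  ∀ ψ : En n → ℝ, ContDiffOn ℝ 2 ψ Ω → (∀ x ∈ Ω, KConvexAt n k ψ x) →
    ∀ x₀ ∈ Ω, ψ x₀ = u x₀ → (∀ x ∈ Ω, ψ x ≤ u x) → Skl k l (hess ψ x₀) ≤ 1

/-- Viscosity solution of the exterior Dirichlet problem
`S_{k,l}(D²u) = 1` in `ℝⁿ ∖ D̄`, `u = φ` on `∂D`, `u ∈ C⁰(ℝⁿ ∖ D)`. -/
def ExtViscSolution (n k l : ℕ) (D : Set (En n)) (φ u : En n → ℝ) : Prop :=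
  ContinuousOn u Dᶜ ∧
  ViscSubOn n k l (closure D)ᶜ u ∧
  ViscSupOn n k l (closure D)ᶜ u ∧
  ∀ x ∈ frontier D, u x = φ x

/-- A smooth, bounded, strictly convex open set. -/
structure SmoothStrictlyConvexDomain (n : ℕ) (D : Set (En n)) : Prop where
  isOpen : IsOpen D
  nonempty : D.Nonempty
  bounded : Bornology.IsBounded D
  strictConvex : StrictConvex ℝ D
  smoothBoundary : ∃ f : En n → ℝ, ContDiff ℝ (⊤ : ℕ∞) f ∧ D = {x | f x < 0} ∧
    ∀ x ∈ frontier D, fderiv ℝ f x ≠ 0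

/-- `½ xᵀ A x`. -/
def quadForm {n : ℕ} (A : Matrix (Fin n) (Fin n) ℝ) (x : En n) : ℝ :=
  (1 / 2) * ∑ i, ∑ j, A i j * x i * x j

/-- `s(x) = ½ ∑ a_i x_i²` (i.e. `½ xᵀAx` for `A = diag a`). -/
def sdiag {n : ℕ} (a : Fin n → ℝ) (x : En n) : ℝ :=
  (1 / 2) * ∑ i, a i * x i ^ 2

end

noncomputable section

/-- `ℋ = (k − l)/(2(H − h))`. -/
def calH (k l : ℕ) (H h : ℝ) : ℝ := ((k : ℝ) - l) / (2 * (H - h))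

/-- The defining property of the function `v_α`: for every `s > 0`, `v_α(s) > 1` and
`(v_α(s)^{k−l} − 1) v_α(s)^{2ℋh} = α s^{−ℋ}`. -/
def IsVsol (k l : ℕ) (H h α : ℝ) (v : ℝ → ℝ) : Prop :=
  ∀ s : ℝ, 0 < s → 1 < v s ∧
    (v s ^ (k - l) - 1) * v s ^ (2 * calH k l H h * h) = α * s ^ (-calH k l H h)

/-- `ω_α(x) = β + ∫_{s̄}^{½xᵀAx} v_α(t) dt` for `A = diag a`. -/
def omegaA {n : ℕ} (β sbar : ℝ) (v : ℝ → ℝ) (a : Fin n → ℝ) (x : En n) : ℝ :=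
  β + ∫ t in sbar..(sdiag a x), v t

end


noncomputable section AuxProof

lemma esymDel_eq (n m : ℕ) (a : Fin n → ℝ) (i : Fin n) :
    esymDel n m a i = ∑ t ∈ Finset.powersetCard m ((Finset.univ : Finset (Fin n)).erase i),
      ∏ j ∈ t, a j := by
  unfold esymDel esym
  rw [← Finset.sum_filter_add_sum_filter_not (Finset.powersetCard m Finset.univ)
    (fun t => i ∈ t)]
  have h1 : ∑ t ∈ (Finset.powersetCard m (Finset.univ : Finset (Fin n))).filter
      (fun t => i ∈ t), ∏ j ∈ t, Function.update a i 0 j = 0 := by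
    apply Finset.sum_eq_zero
    intro t ht
    exact Finset.prod_eq_zero (Finset.mem_filter.1 ht).2 (Function.update_self i 0 a)
  rw [h1, zero_add]
  have hset : (Finset.powersetCard m (Finset.univ : Finset (Fin n))).filter
      (fun t => ¬ i ∈ t) = Finset.powersetCard m ((Finset.univ : Finset (Fin n)).erase i) := by
    ext t
    simp only [Finset.mem_filter, Finset.mem_powersetCard, Finset.subset_erase,
      Finset.subset_univ, true_and]
    tauto
  rw [hset]
  apply Finset.sum_congr rfl
  intro t ht
  apply Finset.prod_congr rfl
  intro j hj
  have : j ≠ i := by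
    have := (Finset.mem_powersetCard.1 ht).1 hj
    exact Finset.ne_of_mem_erase this
  exact Function.update_of_ne this 0 a

lemma esym_succ_split (n m : ℕ) (a : Fin n → ℝ) (i : Fin n) :
    esym n (m+1) a = (∑ t ∈ Finset.powersetCard (m+1) ((Finset.univ : Finset (Fin n)).erase i),
        ∏ j ∈ t, a j) + a i * ∑ t ∈ Finset.powersetCard m ((Finset.univ : Finset (Fin n)).erase i),
        ∏ j ∈ t, a j := by
  have hu : (Finset.univ : Finset (Fin n)) = insert i ((Finset.univ : Finset (Fin n)).erase i) :=
    (Finset.insert_erase (Finset.mem_univ i)).symm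
  have hni : i ∉ (Finset.univ : Finset (Fin n)).erase i := Finset.notMem_erase i _
  unfold esym
  conv_lhs => rw [hu, Finset.powersetCard_succ_insert hni]
  rw [Finset.sum_union, Finset.sum_image]
  · congr 1
    rw [Finset.mul_sum]
    apply Finset.sum_congr rfl
    intro t ht
    have hit : i ∉ t := fun h => hni ((Finset.mem_powersetCard.1 ht).1 h)
    rw [Finset.prod_insert hit]
  · intro t1 h1 t2 h2 he
    have hi1 : i ∉ t1 := fun h => hni ((Finset.mem_powersetCard.1 h1).1 h)
    have hi2 : i ∉ t2 := fun h => hni ((Finset.mem_powersetCard.1 h2).1 h)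
    have : (insert i t1).erase i = (insert i t2).erase i := by rw [he]
    rwa [Finset.erase_insert hi1, Finset.erase_insert hi2] at this
  · rw [Finset.disjoint_left]
    intro t ht hti
    have hit : i ∉ t := fun h => hni ((Finset.mem_powersetCard.1 ht).1 h)
    obtain ⟨t', _, rfl⟩ := Finset.mem_image.1 hti
    exact hit (Finset.mem_insert_self i t')

lemma esym_decomp (n m : ℕ) (a : Fin n → ℝ) (i : Fin n) :
    esym n (m+1) a = esymDel n (m+1) a i + a i * esymDel n m a i := by
  rw [esymDel_eq, esymDel_eq, esym_succ_split n m a i]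

lemma filter_mem_powersetCard (n m : ℕ) (i : Fin n) :
    (Finset.powersetCard (m+1) (Finset.univ : Finset (Fin n))).filter (fun t => i ∈ t)
      = (Finset.powersetCard m ((Finset.univ : Finset (Fin n)).erase i)).image (insert i) := by
  have hni : i ∉ (Finset.univ : Finset (Fin n)).erase i := Finset.notMem_erase i _
  ext T
  simp only [Finset.mem_filter, Finset.mem_powersetCard, Finset.mem_image, Finset.subset_univ,
    true_and, Finset.subset_erase]
  constructor
  · rintro ⟨hc, hi⟩
    exact ⟨T.erase i, ⟨fun h => Finset.notMem_erase i T h,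
      by rw [Finset.card_erase_of_mem hi, hc]; omega⟩, Finset.insert_erase hi⟩
  · rintro ⟨t, ⟨hit, hc⟩, rfl⟩
    have hit' : i ∉ t := fun h => hit h
    exact ⟨by rw [Finset.card_insert_of_notMem hit', hc], Finset.mem_insert_self i t⟩

lemma sum_a_esymDel (n m : ℕ) (a : Fin n → ℝ) :
    ∑ i, a i * esymDel n m a i = ((m:ℝ)+1) * esym n (m+1) a := by
  have key : ∀ i : Fin n, a i * esymDel n m a i
      = ∑ T ∈ (Finset.powersetCard (m+1) (Finset.univ : Finset (Fin n))).filter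
          (fun t => i ∈ t), ∏ j ∈ T, a j := by
    intro i
    rw [filter_mem_powersetCard, Finset.sum_image, esymDel_eq, Finset.mul_sum]
    · apply Finset.sum_congr rfl
      intro t ht
      have hni : i ∉ (Finset.univ : Finset (Fin n)).erase i := Finset.notMem_erase i _
      have hit : i ∉ t := fun h => hni ((Finset.mem_powersetCard.1 ht).1 h)
      rw [Finset.prod_insert hit]
    · intro t1 h1 t2 h2 he
      have hni : i ∉ (Finset.univ : Finset (Fin n)).erase i := Finset.notMem_erase i _
      have hi1 : i ∉ t1 := fun h => hni ((Finset.mem_powersetCard.1 h1).1 h)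
      have hi2 : i ∉ t2 := fun h => hni ((Finset.mem_powersetCard.1 h2).1 h)
      have : (insert i t1).erase i = (insert i t2).erase i := by rw [he]
      rwa [Finset.erase_insert hi1, Finset.erase_insert hi2] at this
  calc ∑ i, a i * esymDel n m a i
      = ∑ i, ∑ T ∈ Finset.powersetCard (m+1) (Finset.univ : Finset (Fin n)),
          if i ∈ T then ∏ j ∈ T, a j else 0 := by
        refine Finset.sum_congr rfl fun i _ => ?_
        rw [key i, Finset.sum_filter]
    _ = ∑ T ∈ Finset.powersetCard (m+1) (Finset.univ : Finset (Fin n)),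
          ∑ i : Fin n, if i ∈ T then ∏ j ∈ T, a j else 0 := Finset.sum_comm
    _ = ((m:ℝ)+1) * esym n (m+1) a := by
        rw [esym, Finset.mul_sum]
        refine Finset.sum_congr rfl fun T hT => ?_
        rw [Finset.sum_ite_mem, Finset.univ_inter, Finset.sum_const,
          (Finset.mem_powersetCard.1 hT).2, nsmul_eq_mul]
        push_cast
        ring

lemma esym_nonneg (n k : ℕ) (a : Fin n → ℝ) (ha : ∀ i, 0 ≤ a i) : 0 ≤ esym n k a :=
  Finset.sum_nonneg fun t _ => Finset.prod_nonneg fun i _ => ha i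

lemma esym_pos (n k : ℕ) (hk : k ≤ n) (a : Fin n → ℝ) (ha : ∀ i, 0 < a i) : 0 < esym n k a := by
  apply Finset.sum_pos (fun t _ => Finset.prod_pos fun i _ => ha i)
  apply Finset.powersetCard_nonempty.2
  simp [hk]

lemma esymDel_nonneg (n m : ℕ) (a : Fin n → ℝ) (ha : ∀ i, 0 ≤ a i) (i : Fin n) :
    0 ≤ esymDel n m a i := by
  rw [esymDel_eq]
  exact Finset.sum_nonneg fun t _ => Finset.prod_nonneg fun j _ => ha j

lemma esymDel_pos (n m : ℕ) (hm : m + 1 ≤ n) (a : Fin n → ℝ) (ha : ∀ i, 0 < a i) (i : Fin n) :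
    0 < esymDel n m a i := by
  rw [esymDel_eq]
  apply Finset.sum_pos (fun t _ => Finset.prod_pos fun j _ => ha j)
  apply Finset.powersetCard_nonempty.2
  rw [Finset.card_erase_of_mem (Finset.mem_univ i), Finset.card_fin]
  omega

lemma sum_terms (n k : ℕ) (hk1 : 1 ≤ k) (hkn : k ≤ n) (a : Fin n → ℝ) (ha : ∀ i, 0 < a i) :
    ∑ i, esymDel n (k - 1) a i * a i / esym n k a = (k : ℝ) := by
  have hσ : 0 < esym n k a := esym_pos n k hkn a ha
  have hsum := sum_a_esymDel n (k-1) a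
  rw [Nat.sub_add_cancel hk1] at hsum
  have hcast : ((k-1:ℕ):ℝ) + 1 = (k:ℝ) := by
    rw [Nat.cast_sub hk1]; push_cast; ring
  rw [hcast] at hsum
  rw [← Finset.sum_div]
  rw [show ∑ i, esymDel n (k-1) a i * a i = ∑ i, a i * esymDel n (k-1) a i from
    Finset.sum_congr rfl fun i _ => mul_comm _ _, hsum]
  field_simp

lemma Hfun_facts (n k : ℕ) (hn : 0 < n) (hk1 : 1 ≤ k) (hkn : k ≤ n)
    (a : Fin n → ℝ) (ha : ∀ i, 0 < a i) :
    (k : ℝ) / n ≤ Hfun n k a ∧ Hfun n k a ≤ 1 := by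
  have : Nonempty (Fin n) := ⟨⟨0, hn⟩⟩
  have hσ : 0 < esym n k a := esym_pos n k hkn a ha
  set f : Fin n → ℝ := fun i => esymDel n (k - 1) a i * a i / esym n k a with hf
  constructor
  · have hsum : ∑ i, f i = (k:ℝ) := sum_terms n k hk1 hkn a ha
    have hle : ∀ i, f i ≤ Hfun n k a := fun i => le_ciSup (Finite.bddAbove_range f) i
    have : (k:ℝ) ≤ n * Hfun n k a := by
      calc (k:ℝ) = ∑ i, f i := hsum.symm
      _ ≤ ∑ _i : Fin n, Hfun n k a := Finset.sum_le_sum fun i _ => hle i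
      _ = n * Hfun n k a := by rw [Finset.sum_const, Finset.card_fin, nsmul_eq_mul]
    rw [div_le_iff₀ (by positivity)]
    linarith
  · apply ciSup_le
    intro i
    rw [div_le_one hσ]
    have hdec := esym_decomp n (k-1) a i
    rw [Nat.sub_add_cancel hk1] at hdec
    have h1 : 0 ≤ esymDel n k a i := esymDel_nonneg n k a (fun j => (ha j).le) i
    rw [mul_comm]
    linarith

lemma hfun_facts (n l : ℕ) (hn : 0 < n) (hl1 : 1 ≤ l) (hln : l ≤ n)
    (a : Fin n → ℝ) (ha : ∀ i, 0 < a i) :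
    0 < hfun n l a ∧ hfun n l a ≤ (l : ℝ) / n := by
  have : Nonempty (Fin n) := ⟨⟨0, hn⟩⟩
  have hσ : 0 < esym n l a := esym_pos n l hln a ha
  have hl0 : l ≠ 0 := by omega
  set f : Fin n → ℝ := fun i => esymDel n (l - 1) a i * a i / esym n l a with hf
  have hfυ : hfun n l a = ⨅ i, f i := by rw [hfun, if_neg hl0]
  have hfpos : ∀ i, 0 < f i := by
    intro i
    have h1 : 0 < esymDel n (l-1) a i := esymDel_pos n (l-1) (by omega) a ha i
    have := ha i
    positivity
  constructor
  · obtain ⟨i₀, hi₀⟩ := Finite.exists_min f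
    have : f i₀ ≤ hfun n l a := by
      rw [hfυ]; exact le_ciInf fun j => hi₀ j
    linarith [hfpos i₀]
  · have hsum : ∑ i, f i = (l:ℝ) := sum_terms n l hl1 hln a ha
    have hle : ∀ i, hfun n l a ≤ f i := by
      intro i; rw [hfυ]; exact ciInf_le (Finite.bddBelow_range f) i
    have : (n:ℝ) * hfun n l a ≤ (l:ℝ) := by
      calc (n:ℝ) * hfun n l a = ∑ _i : Fin n, hfun n l a := by
            rw [Finset.sum_const, Finset.card_fin, nsmul_eq_mul]
      _ ≤ ∑ i, f i := Finset.sum_le_sum fun i _ => hle i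
      _ = (l:ℝ) := hsum
    rw [le_div_iff₀ (by positivity)]
    linarith

lemma vsol_bounds (k l : ℕ) (hlk : l < k) (H h α : ℝ) (hα : 0 < α) (hh : 0 ≤ h)
    (v : ℝ → ℝ) (hv : IsVsol k l H h α v) (hcal : 0 < calH k l H h) :
    ∀ t : ℝ, 0 < t → 0 ≤ v t - 1 ∧ v t - 1 ≤ α * t ^ (-calH k l H h) := by
  intro t ht
  obtain ⟨h1, heq⟩ := hv t ht
  refine ⟨by linarith, ?_⟩
  have hm : 1 ≤ k - l := by omega
  have hvpow : v t ≤ v t ^ (k - l) := by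
    calc v t = v t ^ 1 := (pow_one _).symm
    _ ≤ v t ^ (k - l) := pow_le_pow_right₀ h1.le hm
  have hexp : (0:ℝ) ≤ 2 * calH k l H h * h := by positivity
  have hw : 1 ≤ v t ^ (2 * calH k l H h * h) := by
    have := Real.rpow_le_rpow_of_exponent_le h1.le hexp
    rwa [Real.rpow_zero] at this
  nlinarith [hvpow, hw, heq]

lemma vsol_antitone (k l : ℕ) (hlk : l < k) (H h α : ℝ) (hα : 0 < α) (hh : 0 ≤ h)
    (v : ℝ → ℝ) (hv : IsVsol k l H h α v) (hcal : 0 < calH k l H h) :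
    AntitoneOn v (Set.Ioi (0:ℝ)) := by
  intro s1 hs1 s2 hs2 h12
  by_contra hlt
  push_neg at hlt
  simp only [Set.mem_Ioi] at hs1 hs2
  obtain ⟨h1, heq1⟩ := hv s1 hs1
  obtain ⟨h2, heq2⟩ := hv s2 hs2
  have hm : k - l ≠ 0 := by omega
  have hpowlt : v s1 ^ (k - l) < v s2 ^ (k - l) :=
    pow_lt_pow_left₀ hlt (by linarith) hm
  have hpow1 : 1 < v s1 ^ (k - l) := by
    calc (1:ℝ) < v s1 := h1
    _ ≤ v s1 ^ (k-l) := by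
      calc v s1 = v s1 ^ 1 := (pow_one _).symm
      _ ≤ v s1 ^ (k - l) := pow_le_pow_right₀ h1.le (by omega)
  have hexp : (0:ℝ) ≤ 2 * calH k l H h * h := by positivity
  have hrle : v s1 ^ (2 * calH k l H h * h) ≤ v s2 ^ (2 * calH k l H h * h) :=
    Real.rpow_le_rpow (by linarith) hlt.le hexp
  have hr1 : (1:ℝ) ≤ v s1 ^ (2 * calH k l H h * h) := by
    have := Real.rpow_le_rpow_of_exponent_le h1.le hexp
    rwa [Real.rpow_zero] at this
  have hlhs : α * s1 ^ (-calH k l H h) < α * s2 ^ (-calH k l H h) := by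
    rw [← heq1, ← heq2]
    nlinarith
  have hrhs : α * s2 ^ (-calH k l H h) ≤ α * s1 ^ (-calH k l H h) := by
    apply mul_le_mul_of_nonneg_left _ hα.le
    exact Real.rpow_le_rpow_of_nonpos hs1 h12 (by linarith)
  linarith

lemma tail_bound (k l : ℕ) (hlk : l < k) (H h α sbar β : ℝ) (hα : 0 < α) (hh : 0 ≤ h)
    (hsbar : 0 < sbar) (v : ℝ → ℝ) (hv : IsVsol k l H h α v)
    (hcal : 1 < calH k l H h) :
    IntegrableOn (fun t => v t - 1) (Set.Ioi sbar) ∧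
    ∀ s : ℝ, sbar ≤ s →
      |(β + ∫ t in sbar..s, v t) - (s + (β - sbar + ∫ t in Set.Ioi sbar, (v t - 1)))|
        ≤ α / (calH k l H h - 1) * s ^ (1 - calH k l H h) := by
  set ℋ := calH k l H h with hℋ
  have hcal0 : 0 < ℋ := by linarith
  have hbd := vsol_bounds k l hlk H h α hα hh v hv hcal0
  have hant := vsol_antitone k l hlk H h α hα hh v hv hcal0
  -- measurability via global antitone extension
  set g : ℝ → ℝ := fun t => v (max t sbar) with hg
  have hgant : Antitone g := by
    intro t1 t2 h12
    exact hant (Set.mem_Ioi.2 (lt_of_lt_of_le hsbar (le_max_right _ _)))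
      (Set.mem_Ioi.2 (lt_of_lt_of_le hsbar (le_max_right _ _)))
      (max_le_max h12 le_rfl)
  have hgmeas : Measurable g := hgant.measurable
  have hdom : IntegrableOn (fun t => α * t ^ (-ℋ)) (Set.Ioi sbar) :=
    (integrableOn_Ioi_rpow_of_lt (by linarith) hsbar).const_mul α
  have hgeq : Set.EqOn (fun t => g t - 1) (fun t => v t - 1) (Set.Ioi sbar) := by
    intro t ht
    simp only [hg, max_eq_left (le_of_lt (Set.mem_Ioi.1 ht))]
  have hInt : IntegrableOn (fun t => v t - 1) (Set.Ioi sbar) := by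
    have hgi : IntegrableOn (fun t => g t - 1) (Set.Ioi sbar) := by
      refine Integrable.mono' hdom
        ((hgmeas.sub measurable_const).aestronglyMeasurable.restrict) ?_
      filter_upwards [ae_restrict_mem measurableSet_Ioi] with t ht
      have ht0 : 0 < t := lt_trans hsbar ht
      have h2 := hbd t ht0
      have hgt : g t = v t := by simp only [hg, max_eq_left (le_of_lt (Set.mem_Ioi.1 ht))]
      rw [Real.norm_eq_abs, hgt, abs_of_nonneg h2.1]
      exact h2.2
    exact hgi.congr_fun hgeq measurableSet_Ioi
  refine ⟨hInt, ?_⟩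
  intro s hs
  have hs0 : 0 < s := lt_of_lt_of_le hsbar hs
  have hIntIoc : IntegrableOn (fun t => v t - 1) (Set.Ioc sbar s) :=
    hInt.mono_set Set.Ioc_subset_Ioi_self
  have hIntIoi : IntegrableOn (fun t => v t - 1) (Set.Ioi s) :=
    hInt.mono_set (Set.Ioi_subset_Ioi hs)
  have hsplit : (∫ t in Set.Ioi sbar, (v t - 1))
      = (∫ t in Set.Ioc sbar s, (v t - 1)) + ∫ t in Set.Ioi s, (v t - 1) := by
    rw [← Set.Ioc_union_Ioi_eq_Ioi hs,
      setIntegral_union (Set.Ioc_disjoint_Ioi le_rfl) measurableSet_Ioi hIntIoc hIntIoi]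
  have hIoc : (∫ t in sbar..s, v t) = (s - sbar) + ∫ t in Set.Ioc sbar s, (v t - 1) := by
    rw [intervalIntegral.integral_of_le hs]
    have : (∫ t in Set.Ioc sbar s, v t) = ∫ t in Set.Ioc sbar s, ((v t - 1) + 1) := by
      apply setIntegral_congr_fun measurableSet_Ioc
      intro t _; ring
    rw [this, integral_add hIntIoc (integrableOn_const measure_Ioc_lt_top.ne (by simp))]
    rw [setIntegral_const, measureReal_def, Real.volume_Ioc, smul_eq_mul, mul_one,
      ENNReal.toReal_ofReal (by linarith)]
    ring
  have hnn : 0 ≤ ∫ t in Set.Ioi s, (v t - 1) :=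
    setIntegral_nonneg measurableSet_Ioi fun t ht => (hbd t (lt_trans hs0 ht)).1
  have hkey : (∫ t in Set.Ioi s, (v t - 1)) ≤ α / (ℋ - 1) * s ^ (1 - ℋ) := by
    have hmono : (∫ t in Set.Ioi s, (v t - 1)) ≤ ∫ t in Set.Ioi s, α * t ^ (-ℋ) := by
      apply setIntegral_mono_on hIntIoi (hdom.mono_set (Set.Ioi_subset_Ioi hs)) measurableSet_Ioi
      intro t ht
      exact (hbd t (lt_trans hs0 ht)).2
    have hval : (∫ t in Set.Ioi s, α * t ^ (-ℋ)) = α / (ℋ - 1) * s ^ (1 - ℋ) := by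
      rw [MeasureTheory.integral_const_mul, integral_Ioi_rpow_of_lt (by linarith) hs0]
      rw [show -ℋ + 1 = 1 - ℋ by ring]
      rw [show ℋ - 1 = -(1 - ℋ) by ring, div_neg]
      ring
    linarith
  have hexpr : (β + ∫ t in sbar..s, v t) - (s + (β - sbar + ∫ t in Set.Ioi sbar, (v t - 1)))
      = -(∫ t in Set.Ioi s, (v t - 1)) := by
    rw [hIoc, hsplit]; ring
  rw [hexpr, abs_neg, abs_of_nonneg hnn]
  exact hkey

lemma norm_sq_eq {n : ℕ} (x : En n) : ‖x‖ ^ 2 = ∑ i, x i ^ 2 := by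
  rw [EuclideanSpace.norm_eq, Real.sq_sqrt (by positivity)]
  exact Finset.sum_congr rfl fun i _ => by rw [Real.norm_eq_abs, sq_abs]

lemma final_bound {n : ℕ} (hn : 0 < n) (a : Fin n → ℝ) (ha : ∀ i, 0 < a i)
    (G : ℝ → ℝ) (e K sbar : ℝ) (he : e < 0) (hK : 0 ≤ K)
    (hG : ∀ s : ℝ, max sbar 1 ≤ s → |G s| ≤ K * s ^ e) :
    ∃ C R : ℝ, 0 < C ∧ 0 < R ∧ ∀ x : En n, R ≤ ‖x‖ →
      |G (sdiag a x)| ≤ C * ‖x‖ ^ (2 * e) := by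
  have : Nonempty (Fin n) := ⟨⟨0, hn⟩⟩
  obtain ⟨i₀, hi₀⟩ := Finite.exists_min a
  set c : ℝ := a i₀ / 2 with hc
  have hc0 : 0 < c := by have := ha i₀; positivity
  have hsd : ∀ x : En n, c * ‖x‖ ^ 2 ≤ sdiag a x := by
    intro x
    rw [norm_sq_eq, sdiag, Finset.mul_sum, Finset.mul_sum]
    apply Finset.sum_le_sum
    intro i _
    have h1 : a i₀ * x i ^ 2 ≤ a i * x i ^ 2 :=
      mul_le_mul_of_nonneg_right (hi₀ i) (sq_nonneg _)
    calc c * x i ^ 2 = 1/2 * (a i₀ * x i ^ 2) := by rw [hc]; ring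
    _ ≤ 1/2 * (a i * x i ^ 2) := by linarith
  set B : ℝ := max sbar 1 with hB
  have hB0 : 0 < B := lt_of_lt_of_le one_pos (le_max_right _ _)
  refine ⟨(K + 1) * c ^ e, Real.sqrt ((B + 1) / c), by positivity,
    Real.sqrt_pos.2 (by positivity), ?_⟩
  intro x hx
  have hxpos : 0 < ‖x‖ := lt_of_lt_of_le (Real.sqrt_pos.2 (by positivity)) hx
  have hx2 : (B + 1) / c ≤ ‖x‖ ^ 2 := by
    have := pow_le_pow_left₀ (Real.sqrt_nonneg _) hx 2
    rwa [Real.sq_sqrt (by positivity)] at this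
  have hsB : B + 1 ≤ c * ‖x‖ ^ 2 := by
    have h1 : c * ((B + 1) / c) = B + 1 := by field_simp
    have h2 := mul_le_mul_of_nonneg_left hx2 hc0.le
    linarith
  have hs1 : B ≤ sdiag a x := by linarith [hsd x]
  have hcx : 0 < c * ‖x‖ ^ 2 := by positivity
  have step1 : |G (sdiag a x)| ≤ K * (sdiag a x) ^ e := hG _ hs1
  have step2 : (sdiag a x) ^ e ≤ (c * ‖x‖ ^ 2) ^ e :=
    Real.rpow_le_rpow_of_nonpos hcx (hsd x) he.le
  have step3 : (c * ‖x‖ ^ 2) ^ e = c ^ e * ‖x‖ ^ (2 * e) := by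
    rw [Real.mul_rpow hc0.le (by positivity), ← Real.rpow_natCast ‖x‖ 2,
      ← Real.rpow_mul (norm_nonneg x)]
    norm_num
  have hrpow_nn : (0:ℝ) ≤ ‖x‖ ^ (2*e) := Real.rpow_nonneg (norm_nonneg x) _
  have hce : (0:ℝ) < c ^ e := Real.rpow_pos_of_pos hc0 _
  calc |G (sdiag a x)| ≤ K * (sdiag a x) ^ e := step1
  _ ≤ K * (c ^ e * ‖x‖ ^ (2*e)) := by
      rw [← step3]; exact mul_le_mul_of_nonneg_left step2 hK
  _ ≤ (K + 1) * c ^ e * ‖x‖ ^ (2*e) := by nlinarith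

end AuxProof

/-- Proposition 2.2 (i)(ii): asymptotics of the G-Sym subsolution `ω_α` when
`k − l = 1, H_k − h_l < 1/2` or `k − l ≥ 2`. -/
theorem omega_asymptotics_case_one
    (n k l : ℕ) (hn : 3 ≤ n) (hl1 : 1 ≤ l) (hlk : l < k) (hkn : k ≤ n)
    (α : ℝ) (hα : 0 < α)
    (a : Fin n → ℝ) (ha : ∀ i, 0 < a i)
    (hA : esym n k a = esym n l a)
    (β sbar : ℝ) (hsbar : 0 < sbar)
    (v : ℝ → ℝ) (hv : IsVsol k l (Hfun n k a) (hfun n l a) α v) :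
    (k - l = 1 ∧ Hfun n k a - hfun n l a < 1 / 2 →
      IntegrableOn (fun t => v t - 1) (Set.Ioi sbar) ∧
      ∃ C R : ℝ, 0 < C ∧ 0 < R ∧ ∀ x : En n, R ≤ ‖x‖ →
        |omegaA β sbar v a x -
            (sdiag a x + (β - sbar + ∫ t in Set.Ioi sbar, (v t - 1)))| ≤
          C * ‖x‖ ^ (2 - 2 * calH k l (Hfun n k a) (hfun n l a))) ∧
    (2 ≤ k - l →
      IntegrableOn (fun t => v t - 1) (Set.Ioi sbar) ∧
      ∃ θ : ℝ, ((k : ℝ) - l - 2) / ((n : ℝ) - 2) < θ ∧ θ ≤ 1 ∧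
        ∃ C R : ℝ, 0 < C ∧ 0 < R ∧ ∀ x : En n, R ≤ ‖x‖ →
          |omegaA β sbar v a x -
              (sdiag a x + (β - sbar + ∫ t in Set.Ioi sbar, (v t - 1)))| ≤
            C * ‖x‖ ^ (θ * (2 - (n : ℝ)))) := by
  have hn0 : 0 < n := by omega
  have hln : l ≤ n := by omega
  have hnR : (3:ℝ) ≤ (n:ℝ) := by exact_mod_cast hn
  have hklR : (l:ℝ) < (k:ℝ) := by exact_mod_cast hlk
  have hknR : (k:ℝ) ≤ (n:ℝ) := by exact_mod_cast hkn
  have hl1R : (1:ℝ) ≤ (l:ℝ) := by exact_mod_cast hl1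
  obtain ⟨hHk, hH1⟩ := Hfun_facts n k hn0 (by omega) hkn a ha
  obtain ⟨hh0, hhl⟩ := hfun_facts n l hn0 hl1 hln a ha
  set H := Hfun n k a with hHdef
  set h := hfun n l a with hhdef
  have hnpos : (0:ℝ) < (n:ℝ) := by linarith
  have hdiff : 0 < ((k:ℝ) - l) / n := div_pos (by linarith) hnpos
  have hfrac : (k:ℝ)/n - (l:ℝ)/n = ((k:ℝ) - l)/n := by ring
  have hHh : 0 < H - h := by
    have h1 : ((k:ℝ) - l)/n ≤ H - h := by
      rw [← hfrac]; linarith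
    linarith
  have hHh1 : H - h < 1 := by linarith
  have hμeq : ∀ x : En n, omegaA β sbar v a x = β + ∫ t in sbar..(sdiag a x), v t :=
    fun x => rfl
  constructor
  · -- case (i)
    rintro ⟨hkl1, hHhalf⟩
    have hklR1 : (k:ℝ) - l = 1 := by
      have : k = l + 1 := by omega
      rw [this]; push_cast; ring
    have hcal : 1 < calH k l H h := by
      rw [calH, hklR1]
      exact (one_lt_div (by linarith)).2 (by linarith)
    obtain ⟨hInt, htail⟩ := tail_bound k l hlk H h α sbar β hα hh0.le hsbar v hv hcal
    refine ⟨hInt, ?_⟩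
    set ℋ := calH k l H h with hℋdef
    set G : ℝ → ℝ := fun s =>
      (β + ∫ t in sbar..s, v t) - (s + (β - sbar + ∫ t in Set.Ioi sbar, (v t - 1))) with hGdef
    have hK : (0:ℝ) ≤ α / (ℋ - 1) := div_nonneg hα.le (by linarith)
    have hG : ∀ s : ℝ, max sbar 1 ≤ s → |G s| ≤ α / (ℋ - 1) * s ^ (1 - ℋ) :=
      fun s hs => htail s (le_trans (le_max_left _ _) hs)
    obtain ⟨C, R, hC, hR, hbound⟩ :=
      final_bound (n := n) hn0 a ha G (1 - ℋ) (α / (ℋ - 1)) sbar (by linarith) hK hG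
    refine ⟨C, R, hC, hR, ?_⟩
    intro x hx
    have hb := hbound x hx
    rw [show (2 : ℝ) - 2 * ℋ = 2 * (1 - ℋ) by ring]
    calc |omegaA β sbar v a x - (sdiag a x + (β - sbar + ∫ t in Set.Ioi sbar, (v t - 1)))|
        = |G (sdiag a x)| := by rw [hμeq x]
      _ ≤ C * ‖x‖ ^ (2 * (1 - ℋ)) := hb
  · -- case (ii)
    intro hkl2
    have hklR2 : (2:ℝ) ≤ (k:ℝ) - l := by
      have : l + 2 ≤ k := by omega
      have h2 : ((l:ℝ) + 2) ≤ (k:ℝ) := by exact_mod_cast this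
      linarith
    have hcal : 1 < calH k l H h := by
      rw [calH]
      exact (one_lt_div (by linarith)).2 (by linarith)
    have hcal2 : (k:ℝ) - l < 2 * calH k l H h := by
      rw [calH]
      rw [show 2 * (((k:ℝ) - l) / (2 * (H - h))) = ((k:ℝ) - l) / (H - h) by
        field_simp]
      rw [lt_div_iff₀ hHh]
      nlinarith
    obtain ⟨hInt, htail⟩ := tail_bound k l hlk H h α sbar β hα hh0.le hsbar v hv hcal
    refine ⟨hInt, ?_⟩
    set ℋ := calH k l H h with hℋdef
    have hn2 : (0:ℝ) < (n:ℝ) - 2 := by linarith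
    set θ : ℝ := min 1 (2 * (ℋ - 1) / ((n:ℝ) - 2)) with hθdef
    have hθpos : 0 < θ := lt_min one_pos (div_pos (by linarith) hn2)
    have hθ1 : θ ≤ 1 := min_le_left _ _
    have hθlow : ((k:ℝ) - l - 2) / ((n:ℝ) - 2) < θ := by
      apply lt_min
      · rw [div_lt_one hn2]
        linarith
      · rw [div_lt_div_iff₀ hn2 hn2]
        nlinarith
    set e : ℝ := θ * (2 - (n:ℝ)) / 2 with hedef
    have he : e < 0 := by
      rw [hedef]
      have : θ * (2 - (n:ℝ)) < 0 := mul_neg_of_pos_of_neg hθpos (by linarith)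
      linarith
    have hθle : θ * ((n:ℝ) - 2) ≤ 2 * (ℋ - 1) := by
      have := min_le_right 1 (2 * (ℋ - 1) / ((n:ℝ) - 2))
      rw [hθdef]
      calc min 1 (2 * (ℋ - 1) / ((n:ℝ) - 2)) * ((n:ℝ) - 2)
          ≤ 2 * (ℋ - 1) / ((n:ℝ) - 2) * ((n:ℝ) - 2) :=
            mul_le_mul_of_nonneg_right this hn2.le
        _ = 2 * (ℋ - 1) := by field_simp
    have hexp : 1 - ℋ ≤ e := by
      rw [hedef]
      linarith [hθle]
    set G : ℝ → ℝ := fun s =>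
      (β + ∫ t in sbar..s, v t) - (s + (β - sbar + ∫ t in Set.Ioi sbar, (v t - 1))) with hGdef
    have hK : (0:ℝ) ≤ α / (ℋ - 1) := div_nonneg hα.le (by linarith)
    have hG : ∀ s : ℝ, max sbar 1 ≤ s → |G s| ≤ α / (ℋ - 1) * s ^ e := by
      intro s hs
      have hs1 : (1:ℝ) ≤ s := le_trans (le_max_right _ _) hs
      have h1 := htail s (le_trans (le_max_left _ _) hs)
      have h2 : s ^ (1 - ℋ) ≤ s ^ e := Real.rpow_le_rpow_of_exponent_le hs1 hexp
      calc |G s| ≤ α / (ℋ - 1) * s ^ (1 - ℋ) := h1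
        _ ≤ α / (ℋ - 1) * s ^ e := mul_le_mul_of_nonneg_left h2 hK
    obtain ⟨C, R, hC, hR, hbound⟩ :=
      final_bound (n := n) hn0 a ha G e (α / (ℋ - 1)) sbar he hK hG
    refine ⟨θ, hθlow, hθ1, C, R, hC, hR, ?_⟩
    intro x hx
    have hb := hbound x hx
    rw [show θ * (2 - (n:ℝ)) = 2 * e by rw [hedef]; ring]
    calc |omegaA β sbar v a x - (sdiag a x + (β - sbar + ∫ t in Set.Ioi sbar, (v t - 1)))|
        = |G (sdiag a x)| := by rw [hμeq x]
      _ ≤ C * ‖x‖ ^ (2 * e) := hb
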